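/- Let q ≥ 2, n ≥ 2, set t = ⌈log_q n⌉, and assume t + 1 ≤ n. Then for every a ∈ ℤ_{qn}, the code VT*_a(n;q) = {x ∈ Σ_q^n : Syn(Diff(x)) ≡ a (mod qn)} has cardinality at least q^{n - t - 1}; i.e., there is an injective map from Σ_q^{n-t-1} into VT*_a(n;q) (realized by Encoder 2: fill the message symbols of y = Diff(c) into the positions outside S = {q^{j-1} : 1 ≤ j ≤ t} ∪ {n}, choose the symbols of y at positions in S to achieve Syn(y) ≡ a (mod qn), and output c = Diff^{-1}(y)). -/

import Mathlib

/-- VT syndrome of `y : Fin n → ℕ` (1-indexed): `Syn(y) = ∑ i * y_i`. -/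
def synV {n : ℕ} (y : Fin n → ℕ) : ℕ := ∑ i : Fin n, (i.1 + 1) * y i

/-- Differential vector of `x : Fin n → Fin q`, with values in `{0,…,q-1} ⊆ ℕ`:
`Diff(x)_i = x_i - x_{i+1} (mod q)` for `i < n`, `Diff(x)_n = x_n`. -/
def diffV (q n : ℕ) (x : Fin n → Fin q) : Fin n → ℕ := fun i =>
  if h : i.1 + 1 < n then
    ((((x i : ℕ) : ℤ) - ((x ⟨i.1 + 1, h⟩ : ℕ) : ℤ)) % (q : ℤ)).toNat
  else (x i : ℕ)

lemma digitSum (q : ℕ) (t : ℕ) : ∀ s : ℕ,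
    ∑ j ∈ Finset.range t, q ^ j * (s / q ^ j % q) = s % q ^ t := by
  induction t with
  | zero => intro s; simp [Nat.mod_one]
  | succ t ih =>
    intro s
    rw [Finset.sum_range_succ, ih]
    have h1 : s % q ^ (t+1) % q ^ t = s % q ^ t :=
      Nat.mod_mod_of_dvd _ (pow_dvd_pow q (Nat.le_succ t))
    have h2 : s / q ^ t % q = s % q ^ (t+1) / q ^ t := by
      rw [← Nat.mod_mul_right_div_self, pow_succ]
    have h3 := Nat.div_add_mod (s % q ^ (t+1)) (q ^ t)
    rw [h2]
    linarith

def sFrom {n : ℕ} (y : Fin n → ℕ) (i : Fin n) : ℕ :=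
  ∑ j : Fin n, if i.1 ≤ j.1 then y j else 0

lemma sFrom_step {n : ℕ} (y : Fin n → ℕ) (i : Fin n) (h : i.1 + 1 < n) :
    sFrom y i = y i + sFrom y ⟨i.1 + 1, h⟩ := by
  unfold sFrom
  have key : ∀ j : Fin n, (if i.1 ≤ j.1 then y j else 0) =
      (if j = i then y j else 0) + (if i.1 + 1 ≤ j.1 then y j else 0) := by
    intro j
    rcases eq_or_ne j i with rfl | hne
    · simp
    · have hv : j.1 ≠ i.1 := fun hh => hne (Fin.ext hh)
      by_cases hle : i.1 + 1 ≤ j.1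
      · simp [hne, hle, show i.1 ≤ j.1 by omega]
      · simp [hne, hle, show ¬ i.1 ≤ j.1 by omega]
  rw [Finset.sum_congr rfl (fun j _ => key j), Finset.sum_add_distrib,
    Finset.sum_ite_eq' Finset.univ i y]
  simp

lemma sFrom_last {n : ℕ} (y : Fin n → ℕ) (i : Fin n) (h : ¬ i.1 + 1 < n) :
    sFrom y i = y i := by
  unfold sFrom
  have key : ∀ j : Fin n, (if i.1 ≤ j.1 then y j else 0) = (if j = i then y j else 0) := by
    intro j
    rcases eq_or_ne j i with rfl | hne
    · simp
    · have hv : j.1 ≠ i.1 := fun hh => hne (Fin.ext hh)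
      have : ¬ i.1 ≤ j.1 := by have := j.2; omega
      simp [hne, this]
  rw [Finset.sum_congr rfl (fun j _ => key j), Finset.sum_ite_eq' Finset.univ i y]
  simp

def invDiffV (q n : ℕ) (hq : 0 < q) (y : Fin n → ℕ) : Fin n → Fin q :=
  fun i => ⟨sFrom y i % q, Nat.mod_lt _ hq⟩

lemma diff_invDiff (q n : ℕ) (hq : 0 < q) (y : Fin n → ℕ) (hy : ∀ i, y i < q) :
    diffV q n (invDiffV q n hq y) = y := by
  funext i
  unfold diffV invDiffV
  by_cases h : i.1 + 1 < n
  · simp only [h, dif_pos]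
    rw [Int.natCast_mod, Int.natCast_mod, ← Int.sub_emod]
    have e2 : ((sFrom y i : ℤ) - (sFrom y ⟨i.1 + 1, h⟩ : ℤ)) = (y i : ℤ) := by
      rw [sFrom_step y i h]; push_cast; ring
    rw [e2, Int.emod_eq_of_lt (by positivity) (by exact_mod_cast hy i)]
    simp
  · simp only [h, dif_neg, not_false_iff]
    rw [sFrom_last y i h, Nat.mod_eq_of_lt (hy i)]

/-- With `t = ⌈log_q n⌉ = Nat.clog q n` and `t + 1 ≤ n`, the code `VT*_a(n;q)` has at
least `q^(n-t-1)` codewords (Encoder 2 injects `Σ_q^(n-t-1)` into it). -/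
theorem stmt_19 (q n : ℕ) (hq : 2 ≤ q) (hn : 2 ≤ n)
    (ht : Nat.clog q n + 1 ≤ n) :
    ∀ a : ℕ, a < q * n →
      q ^ (n - Nat.clog q n - 1) ≤
        ((Finset.univ : Finset (Fin n → Fin q)).filter
          (fun x => synV (diffV q n x) % (q * n) = a)).card := by
  intro a ha
  classical
  have hq1 : 1 < q := hq
  have hq0 : 0 < q := by omega
  set t := Nat.clog q n with htdef
  have hpowlt : ∀ j, j < t → q ^ j < n := fun j hj => (Nat.lt_clog_iff_pow_lt hq1).1 hj
  have hnpow : n ≤ q ^ t := Nat.le_pow_clog hq1 n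
  have hn0 : 0 < n := by omega
  have hM : 0 < q * n := by positivity
  -- special positions
  set pos : Fin (t + 1) → Fin n := fun j =>
    if h : j.1 < t then
      ⟨q ^ j.1 - 1, by have h1 := hpowlt j.1 h; have h2 : 0 < q ^ j.1 := pow_pos hq0 _; omega⟩
    else ⟨n - 1, by omega⟩ with hposdef
  have posinj : Function.Injective pos := by
    intro j1 j2 hj
    have v := congrArg Fin.val hj
    by_cases h1 : j1.1 < t <;> by_cases h2 : j2.1 < t <;>
      simp only [hposdef, h1, h2, dif_pos, dif_neg, not_false_iff] at v
    · have e1 : 0 < q ^ j1.1 := pow_pos hq0 _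
      have e2 : 0 < q ^ j2.1 := pow_pos hq0 _
      have : q ^ j1.1 = q ^ j2.1 := by omega
      exact Fin.ext (Nat.pow_right_injective hq this)
    · exfalso; have := hpowlt j1.1 h1; have e1 : 0 < q ^ j1.1 := pow_pos hq0 _; omega
    · exfalso; have := hpowlt j2.1 h2; have e2 : 0 < q ^ j2.1 := pow_pos hq0 _; omega
    · exact Fin.ext (by have := j1.2; have := j2.2; omega)
  set Sset : Finset (Fin n) := Finset.image pos Finset.univ with hSdef
  set F : Finset (Fin n) := Ssetᶜ with hFdef
  have hScard : Sset.card = t + 1 := by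
    rw [hSdef, Finset.card_image_of_injective _ posinj]; simp
  have hFcard : F.card = n - t - 1 := by
    rw [hFdef, Finset.card_compl, hScard]; simp; omega
  set e := F.orderIsoOfFin hFcard with hedef
  -- encoder pieces
  set cc : (Fin (n - t - 1) → Fin q) → ℕ := fun m =>
    ∑ i ∈ F.attach, (i.1.1 + 1) * (m (e.symm i) : ℕ) with hccdef
  set rr : (Fin (n - t - 1) → Fin q) → ℕ := fun m =>
    (a + q * n - cc m % (q * n)) % (q * n) with hrrdef
  set yF : (Fin (n - t - 1) → Fin q) → Fin n → ℕ := fun m i =>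
    if h : i ∈ F then (m (e.symm ⟨i, h⟩) : ℕ)
    else if i.1 + 1 = n then rr m / n
    else rr m % n / q ^ (Nat.log q (i.1 + 1)) % q with hyFdef
  have hrrlt : ∀ m, rr m < q * n := fun m => Nat.mod_lt _ hM
  have hylt : ∀ m i, yF m i < q := by
    intro m i
    simp only [hyFdef]
    split
    · exact (m _).2
    · split
      · exact Nat.div_lt_of_lt_mul (by rw [mul_comm]; exact hrrlt m)
      · exact Nat.mod_lt _ hq0
  -- syndrome value
  have hsyn : ∀ m, synV (yF m) = cc m + rr m := by
    intro m
    have hsplit : synV (yF m) =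
        (∑ i ∈ F, (i.1 + 1) * yF m i) + (∑ i ∈ Sset, (i.1 + 1) * yF m i) := by
      rw [synV, ← Finset.sum_add_sum_compl F]
      congr 1
      rw [hFdef, compl_compl]
    have hF : (∑ i ∈ F, (i.1 + 1) * yF m i) = cc m := by
      rw [hccdef, ← Finset.sum_attach F (fun i => (i.1 + 1) * yF m i)]
      refine Finset.sum_congr rfl (fun i _ => ?_)
      simp only [hyFdef, i.2, dif_pos]
    have hS : (∑ i ∈ Sset, (i.1 + 1) * yF m i) = rr m := by
      rw [hSdef, Finset.sum_image (fun x _ y _ h => posinj h)]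
      have hterm : ∀ j : Fin (t + 1),
          ((pos j).1 + 1) * yF m (pos j) =
          if h : j.1 < t then q ^ j.1 * (rr m % n / q ^ j.1 % q) else n * (rr m / n) := by
        intro j
        have hmem : pos j ∉ F := by
          rw [hFdef, Finset.mem_compl, not_not, hSdef]
          exact Finset.mem_image_of_mem pos (Finset.mem_univ j)
        by_cases h : j.1 < t
        · have hv : (pos j).1 = q ^ j.1 - 1 := by simp [hposdef, h]
          have hp : 0 < q ^ j.1 := pow_pos hq0 _
          have hv1 : (pos j).1 + 1 = q ^ j.1 := by omega
          have hne : (pos j).1 + 1 ≠ n := by have := hpowlt j.1 h; omega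
          simp only [hyFdef, hmem, dif_neg, not_false_iff, hne, if_neg, h, dif_pos]
          rw [hv1, Nat.log_pow hq1]
        · have hv : (pos j).1 = n - 1 := by simp [hposdef, h]
          have hv1 : (pos j).1 + 1 = n := by omega
          simp only [hyFdef, hmem, dif_neg, not_false_iff, hv1, if_pos, h]
      rw [Finset.sum_congr rfl (fun j _ => hterm j)]
      rw [Fin.sum_univ_castSucc]
      have hlast : ¬ (Fin.last t).1 < t := by simp
      rw [dif_neg hlast]
      have hcast : ∀ j : Fin t, (dite ((Fin.castSucc j).1 < t)
          (fun _ => q ^ (Fin.castSucc j).1 * (rr m % n / q ^ (Fin.castSucc j).1 % q))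
          (fun _ => n * (rr m / n))) = q ^ j.1 * (rr m % n / q ^ j.1 % q) := by
        intro j
        rw [dif_pos (by simpa using j.2)]
        rfl
      rw [Finset.sum_congr rfl (fun j _ => hcast j), Fin.sum_univ_eq_sum_range
        (fun j => q ^ j * (rr m % n / q ^ j % q)), digitSum]
      have h1 : rr m % n < n := Nat.mod_lt _ hn0
      rw [Nat.mod_eq_of_lt (lt_of_lt_of_le h1 hnpow)]
      rw [Nat.mod_add_div (rr m) n]
    rw [hsplit, hF, hS]
  -- the syndrome is the target
  have hmod : ∀ m, (cc m + rr m) % (q * n) = a := by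
    intro m
    set M := q * n with hMdef
    have hu : cc m % M < M := Nat.mod_lt _ hM
    have e3 : cc m % M + (a + M - cc m % M) = a + M := by omega
    rw [Nat.add_mod, Nat.mod_eq_of_lt (hrrlt m)]
    show (cc m % M + (a + M - cc m % M) % M) % M = a
    rw [Nat.add_mod_mod, e3, Nat.add_mod_right, Nat.mod_eq_of_lt ha]
  -- the encoder
  set E : (Fin (n - t - 1) → Fin q) → (Fin n → Fin q) := fun m =>
    invDiffV q n hq0 (yF m) with hEdef
  have hdiff : ∀ m, diffV q n (E m) = yF m := fun m =>
    diff_invDiff q n hq0 (yF m) (hylt m)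
  have hmaps : ∀ m ∈ (Finset.univ : Finset (Fin (n - t - 1) → Fin q)),
      E m ∈ (Finset.univ : Finset (Fin n → Fin q)).filter
        (fun x => synV (diffV q n x) % (q * n) = a) := by
    intro m _
    rw [Finset.mem_filter]
    exact ⟨Finset.mem_univ _, by rw [hdiff m, hsyn m]; exact hmod m⟩
  have hinj : Set.InjOn E (Finset.univ : Finset (Fin (n - t - 1) → Fin q)) := by
    intro m1 _ m2 _ h
    have hy : yF m1 = yF m2 := by rw [← hdiff m1, ← hdiff m2, h]
    funext k
    have h2 := congrFun hy ((e k : {x // x ∈ F}) : Fin n)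
    simp only [hyFdef, dif_pos (e k).2] at h2
    have h3 : ∀ (m : Fin (n - t - 1) → Fin q),
        (m (e.symm ⟨((e k : {x // x ∈ F}) : Fin n), (e k).2⟩) : ℕ) = (m k : ℕ) := by
      intro m
      have he : e.symm ⟨((e k : {x // x ∈ F}) : Fin n), (e k).2⟩ = k := e.symm_apply_apply k
      rw [he]
    rw [h3 m1, h3 m2] at h2
    exact Fin.ext h2
  have hcard := Finset.card_le_card_of_injOn E hmaps hinj
  calc q ^ (n - t - 1)
      = (Finset.univ : Finset (Fin (n - t - 1) → Fin q)).card := by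
        simp [Fintype.card_fun]
    _ ≤ _ := hcard
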